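/- Let n ≥ 1 be an integer and let u : ℝ × ℝⁿ → ℝ be twice continuously differentiable. Define w = 1 - e^{-u/2}. Then for all (t,x): ∂²_t w - Δ_x w = (1/2)·e^{-u/2}·( ∂²_t u - Δ_x u + (1/2)|∇_x u|² - (1/2)(∂_t u)² ). In particular, if u satisfies ∂²_t u - Δ_x u = (∂_t u)², then ∂²_t w - Δ_x w = (1/4)·e^{-u/2}·( (∂_t u)² + |∇_x u|² ), which is nonnegative. -/

import Mathlib

open Set

/-- Partial derivative in the time variable of `u : ℝ → (Fin n → ℝ) → ℝ`. -/
noncomputable def partialT (n : ℕ) (u : ℝ → (Fin n → ℝ) → ℝ) : ℝ → (Fin n → ℝ) → ℝ :=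
  fun t x => deriv (fun s => u s x) t

/-- Partial derivative in the `i`-th spatial variable of `u : ℝ → (Fin n → ℝ) → ℝ`. -/
noncomputable def partialX (n : ℕ) (i : Fin n) (u : ℝ → (Fin n → ℝ) → ℝ) :
    ℝ → (Fin n → ℝ) → ℝ :=
  fun t x => deriv (fun s => u t (Function.update x i s)) (x i)

lemma deriv_g_diff' (g : ℝ → ℝ) (hg : ContDiff ℝ 2 g) : Differentiable ℝ (deriv g) := by
  have h2 : ContDiff ℝ ((1:WithTop ℕ∞)+1) g := by rw [one_add_one_eq_two]; exact hg
  exact (contDiff_succ_iff_deriv.mp h2).2.2.differentiable one_ne_zero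

lemma first_deriv' (g : ℝ → ℝ) (hg : ContDiff ℝ 2 g) :
    deriv (fun s => 1 - Real.exp (-(g s) / 2))
      = fun s => 1/2 * Real.exp (-(g s) / 2) * deriv g s := by
  funext s
  have hG : HasDerivAt g (deriv g s) s :=
    ((hg.differentiable (by norm_num)) s).hasDerivAt
  have h1 : HasDerivAt (fun s => -(g s) / 2) (-(deriv g s) / 2) s := hG.neg.div_const 2
  have h2 : HasDerivAt (fun s => 1 - Real.exp (-(g s) / 2))
      (1/2 * Real.exp (-(g s) / 2) * deriv g s) s := by
    have := (h1.exp).const_sub 1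
    exact this.congr_deriv (by ring)
  exact h2.deriv

lemma second_deriv' (g : ℝ → ℝ) (hg : ContDiff ℝ 2 g) (a : ℝ) :
    deriv (deriv (fun s => 1 - Real.exp (-(g s) / 2))) a
      = 1/2 * Real.exp (-(g a) / 2)
        * (deriv (deriv g) a - 1/2 * (deriv g a) ^ 2) := by
  rw [first_deriv' g hg]
  have hG : HasDerivAt g (deriv g a) a :=
    ((hg.differentiable (by norm_num)) a).hasDerivAt
  have h1 : HasDerivAt (fun s => -(g s) / 2) (-(deriv g a) / 2) a := hG.neg.div_const 2
  have hE : HasDerivAt (fun s => Real.exp (-(g s) / 2))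
      (Real.exp (-(g a) / 2) * (-(deriv g a) / 2)) a := h1.exp
  have hG' : HasDerivAt (deriv g) (deriv (deriv g) a) a :=
    ((deriv_g_diff' g hg) a).hasDerivAt
  have h2 : HasDerivAt (fun s => 1/2 * Real.exp (-(g s) / 2) * deriv g s)
      (1/2 * (Real.exp (-(g a) / 2) * (-(deriv g a) / 2)) * deriv g a
        + 1/2 * Real.exp (-(g a) / 2) * deriv (deriv g) a) a :=
    (hE.const_mul (1/2 : ℝ)).mul hG'
  rw [h2.deriv]; ring

/-- Substitution `w = 1 - e^{-u/2}`: for `u` twice continuously differentiable,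
`∂²_t w - Δ_x w = (1/2) e^{-u/2} (∂²_t u - Δ_x u + (1/2)|∇_x u|² - (1/2)(∂_t u)²)`; in
particular, if `∂²_t u - Δ_x u = (∂_t u)²`, then
`∂²_t w - Δ_x w = (1/4) e^{-u/2} ((∂_t u)² + |∇_x u|²) ≥ 0`. -/
theorem substitution_wave_identity
    (n : ℕ) (hn : 1 ≤ n) (u : ℝ → (Fin n → ℝ) → ℝ)
    (hu : ContDiff ℝ 2 (fun q : ℝ × (Fin n → ℝ) => u q.1 q.2))
    (w : ℝ → (Fin n → ℝ) → ℝ)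
    (hw : ∀ t x, w t x = 1 - Real.exp (-(u t x) / 2)) :
    (∀ (t : ℝ) (x : Fin n → ℝ),
      partialT n (partialT n w) t x - ∑ i, partialX n i (partialX n i w) t x
        = (1/2) * Real.exp (-(u t x) / 2)
          * (partialT n (partialT n u) t x - ∑ i, partialX n i (partialX n i u) t x
            + (1/2) * ∑ i, (partialX n i u t x) ^ 2
            - (1/2) * (partialT n u t x) ^ 2)) ∧
    ((∀ (t : ℝ) (x : Fin n → ℝ),
        partialT n (partialT n u) t x - ∑ i, partialX n i (partialX n i u) t x
          = (partialT n u t x) ^ 2) →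
      ∀ (t : ℝ) (x : Fin n → ℝ),
        partialT n (partialT n w) t x - ∑ i, partialX n i (partialX n i w) t x
          = (1/4) * Real.exp (-(u t x) / 2)
            * ((partialT n u t x) ^ 2 + ∑ i, (partialX n i u t x) ^ 2) ∧
        0 ≤ (1/4) * Real.exp (-(u t x) / 2)
            * ((partialT n u t x) ^ 2 + ∑ i, (partialX n i u t x) ^ 2)) := by
  have key : ∀ (t : ℝ) (x : Fin n → ℝ),
      partialT n (partialT n w) t x - ∑ i, partialX n i (partialX n i w) t x
        = (1/2) * Real.exp (-(u t x) / 2)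
          * (partialT n (partialT n u) t x - ∑ i, partialX n i (partialX n i u) t x
            + (1/2) * ∑ i, (partialX n i u t x) ^ 2
            - (1/2) * (partialT n u t x) ^ 2) := by
    intro t x
    -- time direction
    set g : ℝ → ℝ := fun s => u s x with hgdef
    have hG : ContDiff ℝ 2 g := hu.comp (contDiff_id.prodMk contDiff_const)
    have eTw : partialT n (partialT n w) t x
        = deriv (deriv (fun s => 1 - Real.exp (-(g s) / 2))) t := by
      simp only [partialT, hw]
      rfl
    have eTu : partialT n (partialT n u) t x = deriv (deriv g) t := rfl
    have eTu1 : partialT n u t x = deriv g t := rfl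
    have hH : ∀ i : Fin n, ContDiff ℝ 2 (fun s => u t (Function.update x i s)) := by
      intro i
      exact hu.comp (contDiff_const.prodMk ((contDiff_update 2 x i)))
    have eXw : ∀ i : Fin n, partialX n i (partialX n i w) t x
        = deriv (deriv (fun s => 1 - Real.exp (-(u t (Function.update x i s)) / 2))) (x i) := by
      intro i
      simp only [partialX, hw, Function.update_idem, Function.update_self]
    have eXu : ∀ i : Fin n, partialX n i (partialX n i u) t x
        = deriv (deriv (fun s => u t (Function.update x i s))) (x i) := by
      intro i
      simp only [partialX, Function.update_idem, Function.update_self]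
    have eXu1 : ∀ i : Fin n, partialX n i u t x
        = deriv (fun s => u t (Function.update x i s)) (x i) := fun i => rfl
    have hux : ∀ i : Fin n, u t (Function.update x i (x i)) = u t x := by
      intro i; rw [Function.update_eq_self]
    rw [eTw, second_deriv' g hG t]
    have esum : ∀ i : Fin n, partialX n i (partialX n i w) t x
        = 1/2 * Real.exp (-(u t x) / 2)
          * (partialX n i (partialX n i u) t x - 1/2 * (partialX n i u t x) ^ 2) := by
      intro i
      rw [eXw i, second_deriv' _ (hH i) (x i), eXu i, eXu1 i, hux i]
    simp only [esum]
    have hsum : ∑ i : Fin n, 1/2 * Real.exp (-(u t x) / 2)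
          * (partialX n i (partialX n i u) t x - 1/2 * (partialX n i u t x) ^ 2)
        = 1/2 * Real.exp (-(u t x) / 2)
          * (∑ i : Fin n, partialX n i (partialX n i u) t x
            - 1/2 * ∑ i : Fin n, (partialX n i u t x) ^ 2) := by
      rw [← Finset.mul_sum, Finset.sum_sub_distrib, ← Finset.mul_sum]
    rw [hsum, eTu, eTu1]
    ring
  refine ⟨key, fun hwave t x => ⟨?_, ?_⟩⟩
  · rw [key t x, hwave t x]; ring
  · have h1 : (0:ℝ) ≤ Real.exp (-(u t x) / 2) := (Real.exp_pos _).le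
    have h2 : (0:ℝ) ≤ (partialT n u t x) ^ 2 + ∑ i, (partialX n i u t x) ^ 2 :=
      add_nonneg (sq_nonneg _) (Finset.sum_nonneg fun i _ => sq_nonneg _)
    positivity
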